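/- Let w and w′ be words with pairwise distinct letters from a totally ordered alphabet such that w′ is obtained from w by a single Bell rewriting, i.e., w = x·b·u·c·a·y and w′ = x·b·u·a·c·y where a,b,c are letters with a<b<c, u is a (possibly empty) word all of whose letters are smaller than b, and x,y are arbitrary words. Then PSA(w) = PSA(w′). -/

import Mathlib

/-- One step of the patience sorting algorithm: insert the letter `x` into the block of
`S` whose maximum is largest among those maxima smaller than `x`; if no block has
maximum smaller than `x`, create the new block `{x}`. -/
def PSAinsert (x : ℕ) (S : Finset (Finset ℕ)) : Finset (Finset ℕ) :=
  let cands := S.filter (fun B => B.max < (x : WithBot ℕ))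
  if cands.Nonempty then
    let best := (cands.filter (fun B => ∀ C ∈ cands, C.max ≤ B.max)).sup id
    insert (insert x best) (S.erase best)
  else insert {x} S

/-- The patience sorting algorithm applied to a word with distinct letters: the set
partition of its letters obtained by inserting them from left to right. -/
def PSA (w : List ℕ) : Finset (Finset ℕ) :=
  w.foldl (fun S x => PSAinsert x S) ∅

def PSAValid (S : Finset (Finset ℕ)) (A : Finset ℕ) : Prop :=
  (∀ B ∈ S, B.Nonempty) ∧ (∀ B ∈ S, ∀ C ∈ S, B ≠ C → Disjoint B C) ∧ (∀ B ∈ S, B ⊆ A)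

lemma max_inj {S : Finset (Finset ℕ)} {A : Finset ℕ} (h : PSAValid S A)
    {B C : Finset ℕ} (hB : B ∈ S) (hC : C ∈ S) (hmax : B.max = C.max) : B = C := by
  by_contra hne
  obtain ⟨m, hm⟩ := Finset.max_of_nonempty (h.1 B hB)
  have hmB : m ∈ B := Finset.mem_of_max hm
  have hmC : m ∈ C := Finset.mem_of_max (hmax ▸ hm)
  exact absurd hmC (Finset.disjoint_left.1 (h.2.1 B hB C hC hne) hmB)

/-- If `B0` is the argmax candidate, the insertion formula. -/
lemma PSAinsert_eq {S : Finset (Finset ℕ)} {A : Finset ℕ} (h : PSAValid S A)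
    {x : ℕ} {B0 : Finset ℕ} (hB0 : B0 ∈ S) (hlt : B0.max < (x : WithBot ℕ))
    (hmax : ∀ C ∈ S, C.max < (x : WithBot ℕ) → C.max ≤ B0.max) :
    PSAinsert x S = insert (insert x B0) (S.erase B0) := by
  have hB0c : B0 ∈ S.filter (fun B => B.max < (x : WithBot ℕ)) := by
    simp [Finset.mem_filter, hB0, hlt]
  have hne : (S.filter (fun B => B.max < (x : WithBot ℕ))).Nonempty := ⟨B0, hB0c⟩
  have hfilter : (S.filter (fun B => B.max < (x : WithBot ℕ))).filter
      (fun B => ∀ C ∈ S.filter (fun B => B.max < (x : WithBot ℕ)), C.max ≤ B.max) = {B0} := by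
    ext B
    simp only [Finset.mem_filter, Finset.mem_singleton]
    constructor
    · rintro ⟨⟨hBS, hBlt⟩, hBmax⟩
      exact max_inj h hBS hB0 (le_antisymm (hmax B hBS hBlt) (hBmax B0 ⟨hB0, hlt⟩))
    · rintro rfl
      exact ⟨⟨hB0, hlt⟩, fun C hC => hmax C hC.1 hC.2⟩
  simp only [PSAinsert, if_pos hne, hfilter, Finset.sup_singleton, id]

lemma PSAinsert_eq_of_empty {S : Finset (Finset ℕ)} {x : ℕ}
    (h : ∀ B ∈ S, ¬ B.max < (x : WithBot ℕ)) :
    PSAinsert x S = insert {x} S := by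
  have : ¬ (S.filter (fun B => B.max < (x : WithBot ℕ))).Nonempty := by
    rintro ⟨B, hB⟩
    rw [Finset.mem_filter] at hB
    exact h B hB.1 hB.2
  simp [PSAinsert, this]

lemma exists_argmax {S : Finset (Finset ℕ)} {x : ℕ}
    (hne : (S.filter (fun B => B.max < (x : WithBot ℕ))).Nonempty) :
    ∃ B0 ∈ S, B0.max < (x : WithBot ℕ) ∧
      ∀ C ∈ S, C.max < (x : WithBot ℕ) → C.max ≤ B0.max := by
  obtain ⟨B0, hB0, hmax⟩ := Finset.exists_max_image _ (fun B => B.max) hne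
  rw [Finset.mem_filter] at hB0
  exact ⟨B0, hB0.1, hB0.2, fun C hC hClt => hmax C (Finset.mem_filter.2 ⟨hC, hClt⟩)⟩

lemma valid_insert {S : Finset (Finset ℕ)} {A : Finset ℕ} (h : PSAValid S A)
    {x : ℕ} (hx : x ∉ A) : PSAValid (PSAinsert x S) (insert x A) := by
  have hfresh : ∀ B ∈ S, x ∉ B := fun B hB hxB => hx (h.2.2 B hB hxB)
  by_cases hne : (S.filter (fun B => B.max < (x : WithBot ℕ))).Nonempty
  · obtain ⟨B0, hB0, hlt, hmax⟩ := exists_argmax hne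
    rw [PSAinsert_eq h hB0 hlt hmax]
    refine ⟨?_, ?_, ?_⟩
    · intro B hB
      rcases Finset.mem_insert.1 hB with rfl | hB
      · exact ⟨x, Finset.mem_insert_self _ _⟩
      · exact h.1 B (Finset.mem_of_mem_erase hB)
    · intro B hB C hC hne'
      have key : ∀ D ∈ S.erase B0, Disjoint (insert x B0) D := by
        intro D hD
        have hDS := Finset.mem_of_mem_erase hD
        have : Disjoint B0 D := h.2.1 B0 hB0 D hDS (Ne.symm (Finset.ne_of_mem_erase hD))
        simp [Finset.disjoint_insert_left, hfresh D hDS, this]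
      rcases Finset.mem_insert.1 hB with rfl | hB
      · rcases Finset.mem_insert.1 hC with rfl | hC
        · exact absurd rfl hne'
        · exact key C hC
      · rcases Finset.mem_insert.1 hC with rfl | hC
        · exact (key B hB).symm
        · exact h.2.1 B (Finset.mem_of_mem_erase hB) C (Finset.mem_of_mem_erase hC) hne'
    · intro B hB
      rcases Finset.mem_insert.1 hB with rfl | hB
      · exact Finset.insert_subset_insert _ (h.2.2 B0 hB0)
      · exact (h.2.2 B (Finset.mem_of_mem_erase hB)).trans (Finset.subset_insert _ _)
  · rw [PSAinsert, if_neg hne]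
    refine ⟨?_, ?_, ?_⟩
    · intro B hB
      rcases Finset.mem_insert.1 hB with rfl | hB
      · exact ⟨x, Finset.mem_singleton_self _⟩
      · exact h.1 B hB
    · intro B hB C hC hne'
      have key : ∀ D ∈ S, Disjoint ({x} : Finset ℕ) D := by
        intro D hD
        simp [Finset.disjoint_singleton_left, hfresh D hD]
      rcases Finset.mem_insert.1 hB with rfl | hB
      · rcases Finset.mem_insert.1 hC with rfl | hC
        · exact absurd rfl hne'
        · exact key C hC
      · rcases Finset.mem_insert.1 hC with rfl | hC
        · exact (key B hB).symm
        · exact h.2.1 B hB C hC hne'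
    · intro B hB
      rcases Finset.mem_insert.1 hB with rfl | hB
      · simp
      · exact (h.2.2 B hB).trans (Finset.subset_insert _ _)

lemma valid_foldl {S : Finset (Finset ℕ)} {A : Finset ℕ} (h : PSAValid S A)
    (w : List ℕ) (hw : ∀ z ∈ w, z ∉ A) (hnd : w.Nodup) :
    PSAValid (w.foldl (fun S x => PSAinsert x S) S) (A ∪ w.toFinset) := by
  induction w generalizing S A with
  | nil => simpa using h
  | cons z w ih =>
    rw [List.foldl_cons]
    have h1 := ih (valid_insert h (hw z (by simp)))
      (fun z' hz' => by
        simp only [Finset.mem_insert, not_or]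
        exact ⟨fun e => (List.nodup_cons.1 hnd).1 (e ▸ hz'), hw z' (by simp [hz'])⟩)
      (List.nodup_cons.1 hnd).2
    have : insert z A ∪ w.toFinset = A ∪ (z :: w).toFinset := by
      simp [Finset.insert_union, Finset.union_insert]
    rwa [this] at h1

lemma maxb_insert {S : Finset (Finset ℕ)} {A : Finset ℕ} (h : PSAValid S A)
    {b z : ℕ} (hz : z < b) (hD : ∃ D ∈ S, D.max = (b : WithBot ℕ)) :
    ∃ D ∈ PSAinsert z S, D.max = (b : WithBot ℕ) := by
  obtain ⟨D, hDS, hDmax⟩ := hD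
  by_cases hne : (S.filter (fun B => B.max < (z : WithBot ℕ))).Nonempty
  · obtain ⟨B0, hB0, hlt, hmax⟩ := exists_argmax hne
    rw [PSAinsert_eq h hB0 hlt hmax]
    refine ⟨D, ?_, hDmax⟩
    refine Finset.mem_insert_of_mem (Finset.mem_erase.2 ⟨?_, hDS⟩)
    rintro rfl
    rw [hDmax] at hlt
    exact absurd (WithBot.coe_lt_coe.1 hlt) (not_lt.2 hz.le)
  · rw [PSAinsert, if_neg hne]
    exact ⟨D, Finset.mem_insert_of_mem hDS, hDmax⟩

lemma maxb_foldl {S : Finset (Finset ℕ)} {A : Finset ℕ} (h : PSAValid S A)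
    {b : ℕ} (w : List ℕ) (hD : ∃ D ∈ S, D.max = (b : WithBot ℕ))
    (hwb : ∀ z ∈ w, z < b) (hw : ∀ z ∈ w, z ∉ A) (hnd : w.Nodup) :
    ∃ D ∈ w.foldl (fun S x => PSAinsert x S) S, D.max = (b : WithBot ℕ) := by
  induction w generalizing S A with
  | nil => simpa using hD
  | cons z w ih =>
    rw [List.foldl_cons]
    exact ih (valid_insert h (hw z (by simp)))
      (maxb_insert h (hwb z (by simp)) hD)
      (fun z' hz' => hwb z' (by simp [hz']))
      (fun z' hz' => by
        simp only [Finset.mem_insert, not_or]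
        exact ⟨fun e => (List.nodup_cons.1 hnd).1 (e ▸ hz'), hw z' (by simp [hz'])⟩)
      (List.nodup_cons.1 hnd).2

lemma psa_comm {S : Finset (Finset ℕ)} {A : Finset ℕ} (h : PSAValid S A)
    {a b c : ℕ} (ha : a ∉ A) (hc : c ∉ A) (hab : a < b) (hbc : b < c)
    (hD : ∃ D ∈ S, D.max = (b : WithBot ℕ)) :
    PSAinsert c (PSAinsert a S) = PSAinsert a (PSAinsert c S) := by
  obtain ⟨D, hDS, hDmax⟩ := hD
  have hDc : D.max < (c : WithBot ℕ) := by rw [hDmax]; exact_mod_cast hbc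
  have hnec : (S.filter (fun B => B.max < (c : WithBot ℕ))).Nonempty :=
    ⟨D, Finset.mem_filter.2 ⟨hDS, hDc⟩⟩
  obtain ⟨Bc, hBcS, hBclt, hBcmax⟩ := exists_argmax hnec
  have hbBc : (b : WithBot ℕ) ≤ Bc.max := hDmax ▸ hBcmax D hDS hDc
  have habW : (a : WithBot ℕ) < (b : WithBot ℕ) := by exact_mod_cast hab
  have haBc : (a : WithBot ℕ) < Bc.max := lt_of_lt_of_le habW hbBc
  have hcS : PSAinsert c S = insert (insert c Bc) (S.erase Bc) :=
    PSAinsert_eq h hBcS hBclt hBcmax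
  have hafreshBc : a ∉ Bc := fun hm => ha (h.2.2 _ hBcS hm)
  have hmaxcBc : (insert c Bc).max = (c : WithBot ℕ) := by
    rw [Finset.max_insert]
    exact max_eq_left hBclt.le
  have hVc : PSAValid (PSAinsert c S) (insert c A) := valid_insert h hc
  by_cases hnea : (S.filter (fun B => B.max < (a : WithBot ℕ))).Nonempty
  · obtain ⟨Ba, hBaS, hBalt, hBamax⟩ := exists_argmax hnea
    have hBane : Ba ≠ Bc := by
      rintro rfl; exact absurd (hBalt.trans haBc) (lt_irrefl _)
    have haS : PSAinsert a S = insert (insert a Ba) (S.erase Ba) :=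
      PSAinsert_eq h hBaS hBalt hBamax
    have hVa : PSAValid (PSAinsert a S) (insert a A) := valid_insert h ha
    have hmaxaBa : (insert a Ba).max = (a : WithBot ℕ) := by
      rw [Finset.max_insert]
      exact max_eq_left hBalt.le
    have hcfreshBa : c ∉ Ba := fun hm => hc (h.2.2 _ hBaS hm)
    have hL : PSAinsert c (PSAinsert a S) =
        insert (insert c Bc) ((insert (insert a Ba) (S.erase Ba)).erase Bc) := by
      rw [haS]
      refine PSAinsert_eq (haS ▸ hVa) ?_ hBclt ?_
      · exact Finset.mem_insert_of_mem (Finset.mem_erase.2 ⟨hBane.symm, hBcS⟩)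
      · intro C hC hClt
        rcases Finset.mem_insert.1 hC with rfl | hC
        · rw [hmaxaBa]; exact le_trans habW.le hbBc
        · exact hBcmax C (Finset.mem_of_mem_erase hC) hClt
    have hR : PSAinsert a (PSAinsert c S) =
        insert (insert a Ba) ((insert (insert c Bc) (S.erase Bc)).erase Ba) := by
      rw [hcS]
      refine PSAinsert_eq (hcS ▸ hVc) ?_ hBalt ?_
      · exact Finset.mem_insert_of_mem (Finset.mem_erase.2 ⟨hBane, hBaS⟩)
      · intro C hC hClt
        rcases Finset.mem_insert.1 hC with rfl | hC
        · rw [hmaxcBc] at hClt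
          exact absurd (hClt.trans (habW.trans (by exact_mod_cast hbc))) (lt_irrefl _)
        · exact hBamax C (Finset.mem_of_mem_erase hC) hClt
    rw [hL, hR,
      Finset.erase_insert_of_ne (fun e : insert a Ba = Bc => hafreshBc (e ▸ Finset.mem_insert_self a Ba)),
      Finset.erase_insert_of_ne (fun e : insert c Bc = Ba => hcfreshBa (e ▸ Finset.mem_insert_self c Bc)),
      Finset.insert_comm, Finset.erase_right_comm]
  · have hno : ∀ B ∈ S, ¬ B.max < (a : WithBot ℕ) := fun B hB hlt =>
      hnea ⟨B, Finset.mem_filter.2 ⟨hB, hlt⟩⟩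
    have haS : PSAinsert a S = insert {a} S := PSAinsert_eq_of_empty hno
    have hVa : PSAValid (PSAinsert a S) (insert a A) := valid_insert h ha
    have hL : PSAinsert c (PSAinsert a S) =
        insert (insert c Bc) ((insert {a} S).erase Bc) := by
      rw [haS]
      refine PSAinsert_eq (haS ▸ hVa) (Finset.mem_insert_of_mem hBcS) hBclt ?_
      intro C hC hClt
      rcases Finset.mem_insert.1 hC with rfl | hC
      · rw [Finset.max_singleton]; exact le_trans habW.le hbBc
      · exact hBcmax C hC hClt
    have hR : PSAinsert a (PSAinsert c S) =
        insert {a} (insert (insert c Bc) (S.erase Bc)) := by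
      rw [hcS]
      refine PSAinsert_eq_of_empty ?_
      intro C hC hClt
      rcases Finset.mem_insert.1 hC with rfl | hC
      · rw [hmaxcBc] at hClt
        exact absurd (hClt.trans (habW.trans (by exact_mod_cast hbc))) (lt_irrefl _)
      · exact hno C (Finset.mem_of_mem_erase hC) hClt
    rw [hL, hR,
      Finset.erase_insert_of_ne (fun e : ({a} : Finset ℕ) = Bc => hafreshBc (e ▸ Finset.mem_singleton_self a)),
      Finset.insert_comm]

lemma maxb_start {S : Finset (Finset ℕ)} {A : Finset ℕ} (h : PSAValid S A) (b : ℕ) :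
    ∃ D ∈ PSAinsert b S, D.max = (b : WithBot ℕ) := by
  by_cases hne : (S.filter (fun B => B.max < (b : WithBot ℕ))).Nonempty
  · obtain ⟨B0, hB0, hlt, hmax⟩ := exists_argmax hne
    rw [PSAinsert_eq h hB0 hlt hmax]
    exact ⟨insert b B0, Finset.mem_insert_self _ _, by
      rw [Finset.max_insert]; exact max_eq_left hlt.le⟩
  · rw [PSAinsert, if_neg hne]
    exact ⟨{b}, Finset.mem_insert_self _ _, Finset.max_singleton⟩

/-- A single Bell rewriting `x·b·u·c·a·y ≡ x·b·u·a·c·y` (with `a < b < c` and all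
letters of `u` smaller than `b`) does not change the result of the patience sorting
algorithm. -/
theorem PSA_invariant_under_Bell_rewriting
    (x y u : List ℕ) (a b c : ℕ) (hab : a < b) (hbc : b < c)
    (hu : ∀ z ∈ u, z < b)
    (hdist : (x ++ b :: u ++ c :: a :: y).Nodup) :
    PSA (x ++ b :: u ++ c :: a :: y) = PSA (x ++ b :: u ++ a :: c :: y) := by
  have heq1 : x ++ b :: u ++ c :: a :: y = (x ++ b :: u) ++ c :: a :: y := by simp
  have heq2 : x ++ b :: u ++ a :: c :: y = (x ++ b :: u) ++ a :: c :: y := by simp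
  rw [heq1] at hdist
  rw [List.nodup_append] at hdist
  obtain ⟨h1, _, h3⟩ := hdist
  have ha1 : a ∉ x ++ b :: u := fun hm => h3 a hm a (by simp) rfl
  have hc1 : c ∉ x ++ b :: u := fun hm => h3 c hm c (by simp) rfl
  have h1' := h1
  rw [List.nodup_append] at h1'
  obtain ⟨hx, hbu, hdisj⟩ := h1'
  have hbux := List.nodup_cons.1 hbu
  -- set up states
  have hVemp : PSAValid ∅ (∅ : Finset ℕ) := by
    refine ⟨?_, ?_, ?_⟩ <;> simp
  have hV0 : PSAValid (x.foldl (fun S z => PSAinsert z S) ∅) x.toFinset := by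
    have := valid_foldl hVemp x (by simp) hx
    rwa [Finset.empty_union] at this
  have hb0 : b ∉ x.toFinset := by
    rw [List.mem_toFinset]
    exact fun hm => hdisj b hm b (by simp) rfl
  have hD1 := maxb_start hV0 b
  have hVb := valid_insert hV0 hb0
  have hD : ∃ D ∈ (x ++ b :: u).foldl (fun S z => PSAinsert z S) ∅,
      D.max = (b : WithBot ℕ) := by
    rw [List.foldl_append, List.foldl_cons]
    refine maxb_foldl hVb u hD1 hu ?_ hbux.2
    intro z hz
    simp only [Finset.mem_insert, List.mem_toFinset, not_or]
    exact ⟨fun e => hbux.1 (e ▸ hz), fun hm => hdisj z hm z (by simp [hz]) rfl⟩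
  have hV : PSAValid ((x ++ b :: u).foldl (fun S z => PSAinsert z S) ∅)
      ((x ++ b :: u).toFinset) := by
    have := valid_foldl hVemp (x ++ b :: u) (by simp) h1
    rwa [Finset.empty_union] at this
  have ha' : a ∉ (x ++ b :: u).toFinset := by rwa [List.mem_toFinset]
  have hc' : c ∉ (x ++ b :: u).toFinset := by rwa [List.mem_toFinset]
  rw [heq1, heq2, PSA, PSA]
  simp only [List.foldl_append, List.foldl_cons] at hD hV ⊢
  exact congrArg (fun s => List.foldl (fun S z => PSAinsert z S) s y)
    (psa_comm hV ha' hc' hab hbc hD).symm
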